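/- (Finite lifetime: every policy is an AIXI, core construction.) Assume Γ_1 > 0, Γ_{m+1} = 0 for some m ∈ ℕ, and e⁰ ∈ E with r(e⁰) = 0. Let ξ be a CCS with full support and π any policy such that V^π_ξ(h) > 0 for every history h consistent with π of length < m. Then there exists ε' ∈ (0,1] such that, with ν the π-dogmatic environment for ξ and ξ' := (1/2)·ν + (ε'/2)·ξ, for every history h consistent with π of length < m the action π(h) is the unique ξ'-optimal action at h, i.e., V^*_{ξ'}(h·π(h)) > V^*_{ξ'}(h·β) for all β ≠ π(h). -/

import Mathlib

open scoped Classical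

/-- A history: a finite alternating sequence of action–percept pairs. -/
abbrev Hist (A E : Type*) := List (A × E)

/-- A policy maps histories to actions. -/
abbrev Policy (A E : Type*) := Hist A E → A

/-- A chronological conditional semimeasure (CCS, environment):
values in `[0,1]`, and the chronological semimeasure condition. -/
structure CCS (A E : Type*) [Fintype E] where
  val : Hist A E → ℝ
  nonneg : ∀ h, 0 ≤ val h
  le_one : ∀ h, val h ≤ 1
  chrono : ∀ (h : Hist A E) (a : A), (∑ e : E, val (h ++ [(a, e)])) ≤ val h

/-- `Gam γ t = Γ_t = ∑_{i ≥ t} γ_i`, the discount normalization factor. -/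
noncomputable def Gam (γ : ℕ → ℝ) (t : ℕ) : ℝ := ∑' i : ℕ, γ (t + i)

/-- Extend a history by a list of percepts, with actions chosen by the policy `π`. -/
def extendH {A E : Type*} (π : Policy A E) : Hist A E → List E → Hist A E
  | h, [] => h
  | h, e :: es => extendH π (h ++ [(π h, e)]) es

/-- The value `V^π_ν(ae_{<t})` of policy `π` in environment `ν` given history `h = ae_{<t}`
(with `t = h.length + 1`); `0` whenever `Γ_t ≤ 0` or `ν(e_{<t} ∣ a_{<t}) ≤ 0`. -/
noncomputable def V {A E : Type*} [Fintype E] (γ : ℕ → ℝ) (r : E → ℝ)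
    (π : Policy A E) (ν : CCS A E) (h : Hist A E) : ℝ :=
  if 0 < Gam γ (h.length + 1) ∧ 0 < ν.val h then
    (1 / (Gam γ (h.length + 1) * ν.val h)) *
      ∑' n : ℕ, γ (h.length + 1 + n) *
        ∑ es : Fin (n + 1) → E,
          r (es (Fin.last n)) * ν.val (extendH π h (List.ofFn es))
  else 0

/-- The value `V^π_ν(h a)` of a history ending in the action `a`:
the action at time `t` is `a`, and `π` is followed from time `t+1` on. -/
noncomputable def Vact {A E : Type*} [Fintype E] (γ : ℕ → ℝ) (r : E → ℝ)
    (π : Policy A E) (ν : CCS A E) (h : Hist A E) (a : A) : ℝ :=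
  V γ r (fun h' => if h' = h then a else π h') ν h

/-- The optimal value `V^*_ν(h) = sup_π V^π_ν(h)`. -/
noncomputable def VOpt {A E : Type*} [Fintype E] (γ : ℕ → ℝ) (r : E → ℝ)
    (ν : CCS A E) (h : Hist A E) : ℝ :=
  ⨆ π : Policy A E, V γ r π ν h

/-- The optimal value `V^*_ν(h a)` of a history ending in an action. -/
noncomputable def VOptAct {A E : Type*} [Fintype E] (γ : ℕ → ℝ) (r : E → ℝ)
    (ν : CCS A E) (h : Hist A E) (a : A) : ℝ :=
  ⨆ π : Policy A E, Vact γ r π ν h a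

/-- A history is consistent with `π` iff each of its actions is the one chosen by `π`. -/
def Consistent {A E : Type*} (π : Policy A E) (h : Hist A E) : Prop :=
  ∀ (k : ℕ) (hk : k < h.length), (h.get ⟨k, hk⟩).1 = π (h.take k)

/-- Auxiliary function for the dogmatic environment: `pre` is the consistent
prefix processed so far, the second argument is the rest of the history. -/
noncomputable def dogmaAux {A E : Type*} [Fintype E] (ξ : CCS A E) (π : Policy A E)
    (e0 : E) : Hist A E → Hist A E → ℝ
  | pre, [] => ξ.val pre
  | pre, (a, e) :: rest =>
    if a = π pre then dogmaAux ξ π e0 (pre ++ [(a, e)]) rest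
    else if e = e0 ∧ ∀ p ∈ rest, p.2 = e0 then ξ.val pre else 0

/-- The `π`-dogmatic environment for `ξ`: mimics `ξ` while the actions follow `π`;
from the first deviation on it deterministically emits `e0` and freezes the mass. -/
noncomputable def dogma {A E : Type*} [Fintype E] (ξ : CCS A E) (π : Policy A E)
    (e0 : E) (h : Hist A E) : ℝ :=
  dogmaAux ξ π e0 [] h

/-- A CCS has full support iff it is positive on every history. -/
def FullSupport {A E : Type*} [Fintype E] (ξ : CCS A E) : Prop :=
  ∀ h : Hist A E, 0 < ξ.val h

section Helpers
variable {A E : Type*} [Fintype E]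

lemma extendH_cons_structure (σ : Policy A E) :
    ∀ (l : List E) (h : Hist A E) (e : E),
      ∃ tl : Hist A E, extendH σ h (e :: l) = h ++ (σ h, e) :: tl ∧ tl.map Prod.snd = l := by
  intro l
  induction l with
  | nil => intro h e; exact ⟨[], rfl, rfl⟩
  | cons e' l ih =>
    intro h e
    obtain ⟨tl, h1, h2⟩ := ih (h ++ [(σ h, e)]) e'
    refine ⟨(σ (h ++ [(σ h, e)]), e') :: tl, ?_, by simp [h2]⟩
    show extendH σ (h ++ [(σ h, e)]) (e' :: l) = _
    rw [h1]; simp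

lemma sum_extendH_le (ν : CCS A E) (σ : Policy A E) :
    ∀ (n : ℕ) (h : Hist A E),
      (∑ es : Fin (n + 1) → E, ν.val (extendH σ h (List.ofFn es))) ≤ ν.val h := by
  intro n
  induction n with
  | zero =>
    intro h
    have e1 : (∑ es : Fin 1 → E, ν.val (extendH σ h (List.ofFn es)))
        = ∑ e : E, ν.val (h ++ [(σ h, e)]) := by
      apply Fintype.sum_equiv (Equiv.funUnique (Fin 1) E)
      intro es
      have : List.ofFn es = [es 0] := by simp [List.ofFn_succ]
      rw [this]
      rfl
    rw [e1]; exact ν.chrono h (σ h)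
  | succ n ih =>
    intro h
    have e1 : (∑ es : Fin (n + 2) → E, ν.val (extendH σ h (List.ofFn es)))
        = ∑ p : E × (Fin (n + 1) → E), ν.val (extendH σ h (List.ofFn (Fin.cons p.1 p.2))) := by
      refine (Fintype.sum_equiv (Fin.consEquiv (fun _ : Fin (n + 2) => E)) _ _ ?_).symm
      intro p
      rfl
    rw [e1, Fintype.sum_prod_type]
    have e2 : ∀ (e : E) (es : Fin (n + 1) → E),
        extendH σ h (List.ofFn (Fin.cons e es)) = extendH σ (h ++ [(σ h, e)]) (List.ofFn es) := by
      intro e es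
      have : List.ofFn (Fin.cons e es) = e :: List.ofFn es := by
        rw [List.ofFn_succ]
        simp
      rw [this]
      rfl
    calc (∑ e : E, ∑ es : Fin (n + 1) → E, ν.val (extendH σ h (List.ofFn (Fin.cons e es))))
        = ∑ e : E, ∑ es : Fin (n + 1) → E, ν.val (extendH σ (h ++ [(σ h, e)]) (List.ofFn es)) := by
          refine Finset.sum_congr rfl fun e _ => Finset.sum_congr rfl fun es _ => by rw [e2]
      _ ≤ ∑ e : E, ν.val (h ++ [(σ h, e)]) := Finset.sum_le_sum fun e _ => ih _
      _ ≤ ν.val h := ν.chrono h (σ h)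

lemma dogmaAux_append (ξ : CCS A E) (π : Policy A E) (e0 : E) :
    ∀ (l₁ pre : Hist A E),
      (∀ (k : ℕ) (hk : k < l₁.length), (l₁.get ⟨k, hk⟩).1 = π (pre ++ l₁.take k)) →
      ∀ l₂, dogmaAux ξ π e0 pre (l₁ ++ l₂) = dogmaAux ξ π e0 (pre ++ l₁) l₂ := by
  intro l₁
  induction l₁ with
  | nil => intro pre _ l₂; simp
  | cons p l ih =>
    intro pre hcons l₂
    obtain ⟨a, e⟩ := p
    have ha : a = π pre := by simpa using hcons 0 (by simp)
    have step : dogmaAux ξ π e0 pre (((a, e) :: l) ++ l₂)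
        = dogmaAux ξ π e0 (pre ++ [(a, e)]) (l ++ l₂) := by
      simp [dogmaAux, ha]
    rw [step, ih (pre ++ [(a, e)]) ?_ l₂]
    · simp
    · intro k hk
      have h2 := hcons (k + 1) (by simpa using Nat.succ_lt_succ hk)
      simpa using h2

lemma dogma_eq_of_consistent (ξ : CCS A E) (π : Policy A E) (e0 : E) {h : Hist A E}
    (hc : Consistent π h) : dogma ξ π e0 h = ξ.val h := by
  have := dogmaAux_append ξ π e0 h [] (by intro k hk; simpa using hc k hk) []
  simpa [dogma, dogmaAux] using this

lemma consistent_append_single {π : Policy A E} {h : Hist A E} (hc : Consistent π h) (e : E) :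
    Consistent π (h ++ [(π h, e)]) := by
  intro k hk
  rcases lt_or_ge k h.length with hlt | hge
  · have g1 : ((h ++ [(π h, e)]).get ⟨k, hk⟩) = h.get ⟨k, hlt⟩ := by
      simp [List.getElem_append_left hlt]
    have g2 : (h ++ [(π h, e)]).take k = h.take k := by
      rw [List.take_append_of_le_length (le_of_lt hlt)]
    rw [g1, g2]; exact hc k hlt
  · have hk' : k = h.length := by
      have : k < h.length + 1 := by simpa using hk
      omega
    subst hk'
    have g1 : ((h ++ [(π h, e)]).get ⟨h.length, hk⟩) = (π h, e) := by
      simp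
    have g2 : (h ++ [(π h, e)]).take h.length = h := by
      rw [List.take_append_of_le_length le_rfl]; simp
    rw [g1, g2]

lemma consistent_extendH {π : Policy A E} :
    ∀ (l : List E) {h : Hist A E}, Consistent π h → Consistent π (extendH π h l) := by
  intro l
  induction l with
  | nil => intro h hc; exact hc
  | cons e l ih =>
    intro h hc
    exact ih (consistent_append_single hc e)

lemma dogmaAux_nonneg (ξ : CCS A E) (π : Policy A E) (e0 : E) :
    ∀ (l pre : Hist A E), 0 ≤ dogmaAux ξ π e0 pre l := by
  intro l
  induction l with
  | nil => intro pre; simpa [dogmaAux] using ξ.nonneg pre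
  | cons p rest ih =>
    intro pre
    obtain ⟨a, e⟩ := p
    simp only [dogmaAux]
    split
    · exact ih _
    · split
      · exact ξ.nonneg pre
      · exact le_rfl

end Helpers

section Values
variable {A E : Type*} [Fintype E] {γ : ℕ → ℝ} {r : E → ℝ}
  (hγ0 : ∀ t, 0 ≤ γ t) (hγs : Summable γ) (hr : ∀ e : E, 0 ≤ r e ∧ r e ≤ 1)

include hγ0 hγs hr

/-- The numerator summand of `V`. -/
noncomputable abbrev numT (γ : ℕ → ℝ) (r : E → ℝ) (σ : Policy A E) (ν : CCS A E)
    (h : Hist A E) (n : ℕ) : ℝ :=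
  γ (h.length + 1 + n) *
    ∑ es : Fin (n + 1) → E, r (es (Fin.last n)) * ν.val (extendH σ h (List.ofFn es))

lemma inner_sum_nonneg (σ : Policy A E) (ν : CCS A E) (h : Hist A E) (n : ℕ) :
    0 ≤ ∑ es : Fin (n + 1) → E, r (es (Fin.last n)) * ν.val (extendH σ h (List.ofFn es)) :=
  Finset.sum_nonneg fun es _ => mul_nonneg (hr _).1 (ν.nonneg _)

lemma inner_sum_le (σ : Policy A E) (ν : CCS A E) (h : Hist A E) (n : ℕ) :
    (∑ es : Fin (n + 1) → E, r (es (Fin.last n)) * ν.val (extendH σ h (List.ofFn es)))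
      ≤ ν.val h :=
  le_trans (Finset.sum_le_sum fun es _ =>
      mul_le_of_le_one_left (ν.nonneg _) (hr _).2)
    (sum_extendH_le ν σ n h)

lemma summable_const_mul (ν : CCS A E) (h : Hist A E) :
    Summable (fun n : ℕ => γ (h.length + 1 + n) * ν.val h) := by
  have h1 : Summable (fun n : ℕ => γ (n + (h.length + 1))) :=
    (summable_nat_add_iff (h.length + 1)).mpr hγs
  have h2 : Summable (fun n : ℕ => γ (h.length + 1 + n)) :=
    h1.congr fun n => by rw [add_comm]
  exact h2.mul_right _

lemma summable_numT (σ : Policy A E) (ν : CCS A E) (h : Hist A E) :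
    Summable (numT γ r σ ν h) := by
  refine Summable.of_nonneg_of_le (fun n => ?_) (fun n => ?_) (summable_const_mul hγ0 hγs hr ν h)
  · exact mul_nonneg (hγ0 _) (inner_sum_nonneg hγ0 hγs hr σ ν h n)
  · exact mul_le_mul_of_nonneg_left (inner_sum_le hγ0 hγs hr σ ν h n) (hγ0 _)

lemma numT_tsum_nonneg (σ : Policy A E) (ν : CCS A E) (h : Hist A E) :
    0 ≤ ∑' n, numT γ r σ ν h n :=
  tsum_nonneg fun n => mul_nonneg (hγ0 _) (inner_sum_nonneg hγ0 hγs hr σ ν h n)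

lemma numT_tsum_le (σ : Policy A E) (ν : CCS A E) (h : Hist A E) :
    (∑' n, numT γ r σ ν h n) ≤ Gam γ (h.length + 1) * ν.val h := by
  have step : (∑' n, numT γ r σ ν h n) ≤ ∑' n : ℕ, γ (h.length + 1 + n) * ν.val h := by
    refine Summable.tsum_le_tsum (fun n => ?_) (summable_numT hγ0 hγs hr σ ν h)
      (summable_const_mul hγ0 hγs hr ν h)
    exact mul_le_mul_of_nonneg_left (inner_sum_le hγ0 hγs hr σ ν h n) (hγ0 _)
  calc (∑' n, numT γ r σ ν h n) ≤ ∑' n : ℕ, γ (h.length + 1 + n) * ν.val h := step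
    _ = Gam γ (h.length + 1) * ν.val h := by rw [Gam, tsum_mul_right]

lemma V_le_one (σ : Policy A E) (ν : CCS A E) (h : Hist A E) : V γ r σ ν h ≤ 1 := by
  rw [V]
  split
  · rename_i hcond
    obtain ⟨hΓ, hν⟩ := hcond
    have hGv : 0 < Gam γ (h.length + 1) * ν.val h := mul_pos hΓ hν
    calc (1 / (Gam γ (h.length + 1) * ν.val h)) * ∑' n, numT γ r σ ν h n
        ≤ (1 / (Gam γ (h.length + 1) * ν.val h)) * (Gam γ (h.length + 1) * ν.val h) :=
          mul_le_mul_of_nonneg_left (numT_tsum_le hγ0 hγs hr σ ν h) (by positivity)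
      _ = 1 := one_div_mul_cancel hGv.ne'
  · exact zero_le_one

lemma bddAbove_Vact (ν : CCS A E) (h : Hist A E) (a : A) :
    BddAbove (Set.range fun π' : Policy A E => Vact γ r π' ν h a) := by
  refine ⟨1, ?_⟩
  rintro x ⟨π', rfl⟩
  exact V_le_one hγ0 hγs hr _ ν h

lemma V_pos_elim {σ : Policy A E} {ν : CCS A E} {h : Hist A E} (hV : 0 < V γ r σ ν h) :
    0 < Gam γ (h.length + 1) ∧ 0 < ν.val h := by
  by_contra hcon
  rw [V, if_neg hcon] at hV
  exact lt_irrefl 0 hV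

lemma V_mix_eq {ε' : ℝ} (hε : 0 < ε') (ξ ν ξ' : CCS A E) (π : Policy A E) (e0 : E)
    (hν : ∀ h, ν.val h = dogma ξ π e0 h)
    (hξ' : ∀ h, ξ'.val h = (1 / 2) * ν.val h + (ε' / 2) * ξ.val h)
    {h : Hist A E} (hc : Consistent π h) (hΓ : 0 < Gam γ (h.length + 1))
    (hξh : 0 < ξ.val h) :
    V γ r π ξ' h = V γ r π ξ h := by
  set c : ℝ := (1 + ε') / 2 with hcdef
  have hcpos : 0 < c := by positivity
  have hmix : ∀ l : List E, ξ'.val (extendH π h l) = c * ξ.val (extendH π h l) := by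
    intro l
    rw [hξ', hν, dogma_eq_of_consistent ξ π e0 (consistent_extendH l hc)]
    ring
  have hξ'h : ξ'.val h = c * ξ.val h := by simpa [extendH] using hmix []
  have hξ'pos : 0 < ξ'.val h := by rw [hξ'h]; positivity
  rw [V, V, if_pos ⟨hΓ, hξ'pos⟩, if_pos ⟨hΓ, hξh⟩]
  have hterm : ∀ n : ℕ,
      (γ (h.length + 1 + n) * ∑ es : Fin (n + 1) → E,
        r (es (Fin.last n)) * ξ'.val (extendH π h (List.ofFn es)))
      = c * (γ (h.length + 1 + n) * ∑ es : Fin (n + 1) → E,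
        r (es (Fin.last n)) * ξ.val (extendH π h (List.ofFn es))) := by
    intro n
    have hinner : (∑ es : Fin (n + 1) → E,
        r (es (Fin.last n)) * ξ'.val (extendH π h (List.ofFn es)))
        = ∑ es : Fin (n + 1) → E,
          c * (r (es (Fin.last n)) * ξ.val (extendH π h (List.ofFn es))) :=
      Finset.sum_congr rfl fun es _ => by rw [hmix]; ring
    rw [hinner, ← Finset.mul_sum]; ring
  rw [tsum_congr hterm, tsum_mul_left, hξ'h]
  have h1 : (1 + ε') ≠ 0 := by positivity
  field_simp [hΓ.ne', hξh.ne']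

lemma V_beta_le {ε' : ℝ} (hε : 0 < ε') (ξ ν ξ' : CCS A E) (π σ : Policy A E) (e0 : E)
    (hr0 : r e0 = 0)
    (hν : ∀ h, ν.val h = dogma ξ π e0 h)
    (hξ' : ∀ h, ξ'.val h = (1 / 2) * ν.val h + (ε' / 2) * ξ.val h)
    {h : Hist A E} (hc : Consistent π h) (hσ : σ h ≠ π h) (hξh : 0 < ξ.val h) :
    V γ r σ ξ' h ≤ ε' := by
  rw [V]
  split
  · rename_i hcond
    obtain ⟨hΓ, hξ'h⟩ := hcond
    have hvanish : ∀ (n : ℕ) (es : Fin (n + 1) → E),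
        r (es (Fin.last n)) * ν.val (extendH σ h (List.ofFn es)) = 0 := by
      intro n es
      have hofn : List.ofFn es = es 0 :: List.ofFn (fun i : Fin n => es i.succ) :=
        List.ofFn_succ
      obtain ⟨tl, htl, htl2⟩ :=
        extendH_cons_structure σ (List.ofFn fun i : Fin n => es i.succ) h (es 0)
      rw [hofn, htl, hν]
      have hd : dogma ξ π e0 (h ++ (σ h, es 0) :: tl)
          = dogmaAux ξ π e0 h ((σ h, es 0) :: tl) := by
        have := dogmaAux_append ξ π e0 h []
          (by intro k hk; simpa using hc k hk) ((σ h, es 0) :: tl)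
        simpa [dogma] using this
      rw [hd]
      simp only [dogmaAux, if_neg hσ]
      split
      · rename_i hcase
        have hmem : es (Fin.last n) ∈ List.ofFn es := List.mem_ofFn.2 ⟨Fin.last n, rfl⟩
        rw [hofn] at hmem
        have hlast : es (Fin.last n) = e0 := by
          rcases List.mem_cons.1 hmem with h1 | h1
          · rw [h1]; exact hcase.1
          · rw [← htl2] at h1
            obtain ⟨p, hp, hp2⟩ := List.mem_map.1 h1
            rw [← hp2]
            exact hcase.2 p hp
        rw [hlast, hr0, zero_mul]
      · rw [mul_zero]
    have hterm : ∀ n : ℕ, numT γ r σ ξ' h n = (ε' / 2) * numT γ r σ ξ h n := by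
      intro n
      have hinner : ∀ es : Fin (n + 1) → E,
          r (es (Fin.last n)) * ξ'.val (extendH σ h (List.ofFn es))
          = (ε' / 2) * (r (es (Fin.last n)) * ξ.val (extendH σ h (List.ofFn es))) := by
        intro es
        rw [hξ']
        linear_combination (1 / 2 : ℝ) * hvanish n es
      unfold numT
      rw [Finset.sum_congr rfl fun es _ => hinner es, ← Finset.mul_sum]
      ring
    have hnum : (∑' n, numT γ r σ ξ' h n) = (ε' / 2) * ∑' n, numT γ r σ ξ h n := by
      rw [tsum_congr hterm, tsum_mul_left]
    have hξ'hval : ξ'.val h = (1 + ε') / 2 * ξ.val h := by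
      rw [hξ', hν, dogma_eq_of_consistent ξ π e0 hc]; ring
    have hbound := numT_tsum_le hγ0 hγs hr σ ξ h
    have hpre : (0 : ℝ) ≤ 1 / (Gam γ (h.length + 1) * ξ'.val h) :=
      one_div_nonneg.mpr (le_of_lt (mul_pos hΓ hξ'h))
    have h1ε : (1 : ℝ) + ε' ≠ 0 := by positivity
    calc (1 / (Gam γ (h.length + 1) * ξ'.val h)) * ∑' n, numT γ r σ ξ' h n
        = (1 / (Gam γ (h.length + 1) * ξ'.val h))
            * ((ε' / 2) * ∑' n, numT γ r σ ξ h n) := by rw [hnum]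
      _ ≤ (1 / (Gam γ (h.length + 1) * ξ'.val h))
            * ((ε' / 2) * (Gam γ (h.length + 1) * ξ.val h)) := by
          refine mul_le_mul_of_nonneg_left ?_ hpre
          exact mul_le_mul_of_nonneg_left hbound (by positivity)
      _ = ε' / (1 + ε') := by rw [hξ'hval]; field_simp
      _ ≤ ε' := by
          rw [div_le_iff₀ (by positivity)]
          nlinarith
  · exact le_of_lt hε

end Values

/-- **With finite lifetime every policy is an AIXI (core construction).** For a suitable
`ε'`, under the dogmatic mixture `ξ' = (1/2)·ν + (ε'/2)·ξ`, on every `π`-consistent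
history of length `< m` the action `π(h)` is the unique `ξ'`-optimal action. -/
theorem finite_lifetime_every_policy_AIXI {A E : Type*} [Fintype A] [Nonempty A] [Fintype E] [Nonempty E]
    (γ : ℕ → ℝ) (hγ0 : ∀ t, 0 ≤ γ t) (hγs : Summable γ)
    (r : E → ℝ) (hr : ∀ e : E, 0 ≤ r e ∧ r e ≤ 1)
    (m : ℕ) (hΓ1 : 0 < Gam γ 1) (hΓm : Gam γ (m + 1) = 0)
    (e0 : E) (hr0 : r e0 = 0)
    (ξ : CCS A E) (hfs : FullSupport ξ)
    (π : Policy A E)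
    (hπ : ∀ h : Hist A E, Consistent π h → h.length < m → 0 < V γ r π ξ h) :
    ∃ ε' : ℝ, 0 < ε' ∧ ε' ≤ 1 ∧
      ∀ ν ξ' : CCS A E,
        (∀ h : Hist A E, ν.val h = dogma ξ π e0 h) →
        (∀ h : Hist A E, ξ'.val h = (1 / 2) * ν.val h + (ε' / 2) * ξ.val h) →
        ∀ h : Hist A E, Consistent π h → h.length < m →
          ∀ β : A, β ≠ π h →
            VOptAct γ r ξ' h β < VOptAct γ r ξ' h (π h) := by
  have hm : 0 < m := by
    rcases Nat.eq_zero_or_pos m with h0 | h0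
    · rw [h0] at hΓm; norm_num at hΓm; rw [hΓm] at hΓ1; exact absurd hΓ1 (lt_irrefl 0)
    · exact h0
  have hSfin : {h : Hist A E | Consistent π h ∧ h.length < m}.Finite :=
    (List.finite_length_lt (A × E) m).subset fun h hh => hh.2
  have hSne : {h : Hist A E | Consistent π h ∧ h.length < m}.Nonempty :=
    ⟨[], ⟨by intro k hk; simp at hk, by simpa using hm⟩⟩
  obtain ⟨h₀, hh₀, hmin⟩ := Set.exists_min_image _ (V γ r π ξ) hSfin hSne
  have hvpos : 0 < V γ r π ξ h₀ := hπ h₀ hh₀.1 hh₀.2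
  set vmin := V γ r π ξ h₀ with hvdef
  refine ⟨min 1 vmin / 2, by positivity, ?_, ?_⟩
  · calc min 1 vmin / 2 ≤ 1 / 2 := by gcongr; exact min_le_left _ _
      _ ≤ 1 := by norm_num
  intro ν ξ' hν hξ' h hc hlen β hβ
  have hε'pos : (0 : ℝ) < min 1 vmin / 2 := by positivity
  have hVh : 0 < V γ r π ξ h := hπ h hc hlen
  obtain ⟨hΓ, hξh⟩ := V_pos_elim hγ0 hγs hr hVh
  have hub : VOptAct γ r ξ' h β ≤ min 1 vmin / 2 := by
    refine ciSup_le fun π' => ?_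
    refine V_beta_le hγ0 hγs hr hε'pos ξ ν ξ' π _ e0 hr0 hν hξ' hc ?_ hξh
    simpa using hβ
  have hlow : V γ r π ξ h ≤ VOptAct γ r ξ' h (π h) := by
    have heqpol : (fun h' => if h' = h then π h else π h') = π := by
      funext h'; split <;> simp_all
    have h3 : Vact γ r π ξ' h (π h) = V γ r π ξ' h := by
      unfold Vact; rw [heqpol]
    have h2 : V γ r π ξ' h = V γ r π ξ h :=
      V_mix_eq hγ0 hγs hr hε'pos ξ ν ξ' π e0 hν hξ' hc hΓ hξh
    have h4 : Vact γ r π ξ' h (π h) ≤ VOptAct γ r ξ' h (π h) :=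
      le_ciSup (bddAbove_Vact hγ0 hγs hr ξ' h (π h)) π
    rw [← h2, ← h3]; exact h4
  have hεlt : min 1 vmin / 2 < V γ r π ξ h := by
    have hle : vmin ≤ V γ r π ξ h := hmin h ⟨hc, hlen⟩
    have hm2 : min 1 vmin ≤ vmin := min_le_right 1 vmin
    nlinarith
  calc VOptAct γ r ξ' h β ≤ min 1 vmin / 2 := hub
    _ < V γ r π ξ h := hεlt
    _ ≤ VOptAct γ r ξ' h (π h) := hlow
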